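/- Let p(x) = (2π)^{-d/2} |Σ|^{-1/2} exp(-(x-μ)ᵀ Σ⁻¹ (x-μ)/2) be a nondegenerate Gaussian density on ℝ^d with mean μ and covariance Σ, and let h(x) = H x for an m×d matrix H, with ĥ = H μ. Then for each j = 1,…,m, the function φ_j(x) = Σ_{k=1}^d [Σ Hᵀ]_{kj} (x_k - μ_k) satisfies ∇·(p(x) ∇φ_j(x)) = -(h_j(x) - ĥ_j) p(x) for all x ∈ ℝ^d, and ∫ φ_j p dx = 0. Consequently the matrix K with entries K_{lj} = ∂φ_j/∂x_l equals the Kalman gain Σ Hᵀ. -/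

import Mathlib

open MeasureTheory Real Finset

noncomputable def grad {d : ℕ} (f : (Fin d → ℝ) → ℝ) (x : Fin d → ℝ) (i : Fin d) : ℝ :=
  fderiv ℝ f x (Pi.single i 1)

/-- Divergence of the vector field `x ↦ p(x) ∇φ(x)`. -/
noncomputable def divPgrad {d : ℕ} (p φ : (Fin d → ℝ) → ℝ) (x : Fin d → ℝ) : ℝ :=
  ∑ l, fderiv ℝ (fun y => p y * grad φ y l) x (Pi.single l 1)

lemma integral_refl_aux {d : ℕ} (f : (Fin d → ℝ) → ℝ) (a : Fin d → ℝ) :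
    ∫ x, f (a - x) = ∫ x, f x := by
  calc ∫ x, f (a - x) = ∫ x, f (a + x) := by
        rw [← integral_neg_eq_self (fun x => f (a + x))]
        simp [sub_eq_add_neg]
    _ = ∫ x, f x := integral_add_left_eq_self f a

theorem gaussian_kalman_gain
    {d m : ℕ} (Sig : Matrix (Fin d) (Fin d) ℝ) (hSig : Sig.PosDef)
    (μ : Fin d → ℝ) (H : Matrix (Fin m) (Fin d) ℝ)
    (p : (Fin d → ℝ) → ℝ)
    (hp : ∀ x, p x = (2 * π) ^ (-(d : ℝ) / 2) * (Sig.det) ^ (-(1 : ℝ) / 2) *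
      Real.exp (-(1 / 2) * ∑ i, (x i - μ i) * (∑ k, Sig⁻¹ i k * (x k - μ k))))
    (h : (Fin d → ℝ) → Fin m → ℝ)
    (hh : ∀ x j, h x j = ∑ k, H j k * x k)
    (hhat : Fin m → ℝ) (hhat_def : ∀ j, hhat j = ∑ k, H j k * μ k)
    (φ : Fin m → (Fin d → ℝ) → ℝ)
    (hφ : ∀ j x, φ j x = ∑ k, (Sig * H.transpose) k j * (x k - μ k)) :
    (∀ j x, divPgrad p (φ j) x = -(h x j - hhat j) * p x)
    ∧ (∀ j, ∫ x, φ j x * p x = 0)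
    ∧ (∀ l j x, grad (φ j) x l = (Sig * H.transpose) l j) := by
  classical
  have hSinv : Sig⁻¹ * Sig = 1 := Matrix.nonsing_inv_mul Sig hSig.det_pos.ne'.isUnit
  have hSymm : ∀ i k, Sig⁻¹ i k = Sig⁻¹ k i := by
    intro i k
    have h1 : (Sig⁻¹).IsHermitian := hSig.1.inv
    conv_lhs => rw [← h1]
    simp [Matrix.conjTranspose_apply]
  set A := Sig * H.transpose with hA
  set S := Sig⁻¹ with hS
  set g : (Fin d → ℝ) → Fin d → ℝ := fun x i => ∑ k, S i k * (x k - μ k) with hg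
  -- derivative of φ j
  have hφD : ∀ j x, HasFDerivAt (φ j)
      (∑ k, A k j • (ContinuousLinearMap.proj k : (Fin d → ℝ) →L[ℝ] ℝ)) x := by
    intro j x
    have he : φ j = fun y => ∑ k, A k j * (y k - μ k) := funext (hφ j)
    rw [he]
    exact HasFDerivAt.fun_sum fun k _ =>
      (((ContinuousLinearMap.proj k : (Fin d → ℝ) →L[ℝ] ℝ)).hasFDerivAt.sub_const (μ k)).const_mul _
  have hgrad : ∀ l j x, grad (φ j) x l = A l j := by
    intro l j x
    rw [grad, (hφD j x).fderiv]
    simp [ContinuousLinearMap.sum_apply, Pi.single_apply]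
  -- derivative of the quadratic form
  set Q' : (Fin d → ℝ) → ((Fin d → ℝ) →L[ℝ] ℝ) := fun x =>
    ∑ i, ((x i - μ i) • (∑ k, S i k • (ContinuousLinearMap.proj k : (Fin d → ℝ) →L[ℝ] ℝ))
        + g x i • (ContinuousLinearMap.proj i : (Fin d → ℝ) →L[ℝ] ℝ)) with hQ'
  have hqD : ∀ x, HasFDerivAt (fun y => ∑ i, (y i - μ i) * ∑ k, S i k * (y k - μ k)) (Q' x) x := by
    intro x
    apply HasFDerivAt.fun_sum
    intro i _
    have h1 : HasFDerivAt (fun y : Fin d → ℝ => y i - μ i)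
        (ContinuousLinearMap.proj i : (Fin d → ℝ) →L[ℝ] ℝ) x :=
      ((ContinuousLinearMap.proj i : (Fin d → ℝ) →L[ℝ] ℝ)).hasFDerivAt.sub_const (μ i)
    have h2 : HasFDerivAt (fun y : Fin d → ℝ => ∑ k, S i k * (y k - μ k))
        (∑ k, S i k • (ContinuousLinearMap.proj k : (Fin d → ℝ) →L[ℝ] ℝ)) x :=
      HasFDerivAt.fun_sum fun k _ =>
        (((ContinuousLinearMap.proj k : (Fin d → ℝ) →L[ℝ] ℝ)).hasFDerivAt.sub_const (μ k)).const_mul _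
    exact h1.mul h2
  have hQ'app : ∀ x l, Q' x (Pi.single l 1) = 2 * g x l := by
    intro x l
    rw [hQ']
    simp only [ContinuousLinearMap.sum_apply, ContinuousLinearMap.add_apply,
      ContinuousLinearMap.smul_apply, ContinuousLinearMap.proj_apply, smul_eq_mul,
      Pi.single_apply]
    rw [Finset.sum_add_distrib]
    have e1 : ∑ i, (x i - μ i) * ∑ k, S i k * (if k = l then (1:ℝ) else 0) = g x l := by
      rw [hg]
      simp only [mul_ite, mul_one, mul_zero, Finset.sum_ite_eq', Finset.mem_univ, if_true]
      rw [Finset.sum_congr rfl fun i _ => by rw [hSymm i l]]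
      exact Finset.sum_congr rfl fun i _ => mul_comm _ _
    have e2 : ∑ i, g x i * (if i = l then (1:ℝ) else 0) = g x l := by
      simp [Finset.sum_ite_eq']
    rw [e1, e2]; ring
  -- derivative of p
  set C := (2 * π) ^ (-(d : ℝ) / 2) * (Sig.det) ^ (-(1 : ℝ) / 2) with hC
  have hpe : p = fun y => C * Real.exp (-(1 / 2) * ∑ i, (y i - μ i) * ∑ k, S i k * (y k - μ k)) :=
    funext hp
  have hpD : ∀ x, HasFDerivAt p
      (C • ((Real.exp (-(1 / 2) * ∑ i, (x i - μ i) * ∑ k, S i k * (x k - μ k))) •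
        ((-(1 / 2) : ℝ) • Q' x))) x := by
    intro x
    rw [hpe]
    exact (((hqD x).const_mul (-(1 / 2) : ℝ)).exp).const_mul C
  have hpDapp : ∀ x l,
      (C • ((Real.exp (-(1 / 2) * ∑ i, (x i - μ i) * ∑ k, S i k * (x k - μ k))) •
        ((-(1 / 2) : ℝ) • Q' x))) (Pi.single l 1) = -(p x * g x l) := by
    intro x l
    simp only [ContinuousLinearMap.smul_apply, smul_eq_mul, hQ'app, hp x]
    ring
  refine ⟨?_, ?_, hgrad⟩
  · -- divergence identity
    intro j x
    have hterm : ∀ l, fderiv ℝ (fun y => p y * grad (φ j) y l) x (Pi.single l 1)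
        = -(A l j * (p x * g x l)) := by
      intro l
      have he : (fun y => p y * grad (φ j) y l) = fun y => p y * A l j := by
        funext y; rw [hgrad]
      rw [he, ((hpD x).mul_const (A l j)).fderiv]
      simp only [ContinuousLinearMap.smul_apply, smul_eq_mul, hpDapp]
      ring
    rw [divPgrad]
    rw [Finset.sum_congr rfl fun l _ => hterm l]
    have hSA : S * A = H.transpose := by
      rw [hA, ← Matrix.mul_assoc, hSinv, Matrix.one_mul]
    have key : ∑ l, A l j * g x l = ∑ k, H j k * (x k - μ k) := by
      rw [hg]
      simp only [Finset.mul_sum]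
      rw [Finset.sum_comm]
      refine Finset.sum_congr rfl fun k _ => ?_
      have : ∑ l, S k l * A l j = H j k := by
        have := congrFun (congrFun hSA k) j
        rw [Matrix.mul_apply] at this
        rw [this, Matrix.transpose_apply]
      calc ∑ l, A l j * (S l k * (x k - μ k)) = (∑ l, S k l * A l j) * (x k - μ k) := by
            rw [Finset.sum_mul]
            exact Finset.sum_congr rfl fun l _ => by rw [hSymm l k]; ring
        _ = H j k * (x k - μ k) := by rw [this]
    calc ∑ l, -(A l j * (p x * g x l)) = -(∑ l, A l j * g x l) * p x := by
          rw [Finset.sum_neg_distrib, neg_mul, Finset.sum_mul, neg_inj]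
          exact Finset.sum_congr rfl fun l _ => by ring
      _ = -(∑ k, H j k * (x k - μ k)) * p x := by rw [key]
      _ = -(h x j - hhat j) * p x := by
          rw [hh, hhat_def]
          simp [mul_sub, Finset.sum_sub_distrib]
  · -- zero mean
    intro j
    set a : Fin d → ℝ := μ + μ with ha
    have hrefl : ∀ y, φ j (a - y) * p (a - y) = -(φ j y * p y) := by
      intro y
      have hx : ∀ k, (a - y) k - μ k = -(y k - μ k) := by
        intro k; simp [ha]; ring
      have h1 : φ j (a - y) = -φ j y := by
        rw [hφ, hφ]
        rw [← Finset.sum_neg_distrib]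
        exact Finset.sum_congr rfl fun k _ => by rw [hx k]; ring
      have h2 : p (a - y) = p y := by
        rw [hp, hp]
        have hq : ∑ i, ((a - y) i - μ i) * ∑ k, S i k * ((a - y) k - μ k)
            = ∑ i, (y i - μ i) * ∑ k, S i k * (y k - μ k) := by
          refine Finset.sum_congr rfl fun i _ => ?_
          have hin : ∑ k, S i k * ((a - y) k - μ k) = -∑ k, S i k * (y k - μ k) := by
            rw [← Finset.sum_neg_distrib]
            exact Finset.sum_congr rfl fun k _ => by rw [hx k]; ring
          rw [hx i, hin]; ring
        rw [hq]
      rw [h1, h2]; ring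
    have h1 : ∫ x, φ j (a - x) * p (a - x) = ∫ x, φ j x * p x :=
      integral_refl_aux (fun x => φ j x * p x) a
    have h2 : ∫ x, φ j (a - x) * p (a - x) = -∫ x, φ j x * p x := by
      rw [integral_congr_ae (Filter.Eventually.of_forall hrefl)]
      exact integral_neg _
    linarith [h1, h2]
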